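/- For an integer z ≥ 3, write k = φ(z)/2 and d(z) = k + h(z), let α^z be the vector with entries α^z_i = a_i/z for 1 ≤ i ≤ k (where a_1 < ... < a_k are the elements of {a ∈ ℤ : 1 ≤ a ≤ z/2, gcd(a,z)=1}) and α^z_{k+j} = 1/p_j for the distinct prime divisors p_1 < ... < p_{h(z)} of z when z is composite, and let P^z := [0, v^z] + [0, e_2] + ... + [0, e_{d(z)}] ⊆ ℝ^{d(z)} be the lattice parallelepiped with first generator v^z := (z, z·α^z_2, ..., z·α^z_{d(z)})^T ∈ ℤ^{d(z)}. Then P^z has exactly φ(z) interior lattice points, and every interior lattice point w ∈ int(P^z) ∩ ℤ^{d(z)} satisfies ca(P^z, w) = z − 1. -/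

import Mathlib

open Pointwise

/-- The coefficient of asymmetry of a point `w` in a convex set `K`:
`ca(K,w) = min{λ ≥ 1 : w − K ⊆ λ(K − w)}`. -/
noncomputable def ca {E : Type*} [AddCommGroup E] [Module ℝ E] (K : Set E) (w : E) : ℝ :=
  sInf {l : ℝ | 1 ≤ l ∧ ({w} : Set E) - K ⊆ l • (K - {w})}

/-- A point of `ℝ^d` all of whose coordinates are integers. -/
def IsLatticePoint {d : ℕ} (x : Fin d → ℝ) : Prop := ∀ i, ∃ z : ℤ, x i = (z : ℝ)

/-- `h(z)` is `0` if `z` is prime, and otherwise the number of distinct prime divisors. -/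
def hComposite (z : ℕ) : ℕ := if z.Prime then 0 else z.primeFactors.card

set_option maxHeartbeats 4000000 in
theorem extremal_parallelepipeds (z : ℕ) (hz : 3 ≤ z)
    (k : ℕ) (hk : 2 * k = z.totient)
    (h : ℕ) (hh : h = hComposite z)
    (a : Fin k → ℕ) (ha : StrictMono a)
    (haran : ∀ b : ℕ, (∃ i, a i = b) ↔ 1 ≤ b ∧ 2 * b ≤ z ∧ Nat.gcd b z = 1)
    (p : Fin h → ℕ) (hp : StrictMono p)
    (hpran : ∀ q : ℕ, (∃ j, p j = q) ↔ q ∈ z.primeFactors)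
    -- the generator `v^z = (z, z α^z_2, …, z α^z_{d(z)}) = (z, a_2, …, a_k, z/p_1, …, z/p_h)`
    (v : Fin (k + h) → ℕ)
    (hv0 : ∀ i : Fin k, (i : ℕ) = 0 → v (Fin.castAdd h i) = z)
    (hva : ∀ i : Fin k, (i : ℕ) ≠ 0 → v (Fin.castAdd h i) = a i)
    (hvp : ∀ j : Fin h, v (Fin.natAdd k j) = z / p j)
    -- the generators of `P^z`: the first is `v^z`, the others are standard basis vectors
    (g : Fin (k + h) → Fin (k + h) → ℝ)
    (hg0 : ∀ j : Fin (k + h), (j : ℕ) = 0 → g j = fun i => (v i : ℝ))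
    (hg1 : ∀ j : Fin (k + h), (j : ℕ) ≠ 0 → g j = Pi.single j 1)
    (P : Set (Fin (k + h) → ℝ))
    (hP : P = ∑ j : Fin (k + h), segment ℝ (0 : Fin (k + h) → ℝ) (g j)) :
    {x | x ∈ interior P ∧ IsLatticePoint x}.ncard = z.totient ∧
      ∀ w ∈ interior P, IsLatticePoint w → ca P w = (z : ℝ) - 1 := by
  classical
  have hz0 : 0 < z := by omega
  have hzR0 : (0:ℝ) < z := by exact_mod_cast hz0
  have hzR : (3:ℝ) ≤ z := by exact_mod_cast hz
  have hzne : (z:ℝ) ≠ 0 := ne_of_gt hzR0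
  have hkpos : 0 < k := by
    have := Nat.totient_pos.mpr hz0
    omega
  have hd : 0 < k + h := by omega
  set i0 : Fin (k + h) := ⟨0, hd⟩ with hi0def
  have hvz : v i0 = z := by
    have h1 : Fin.castAdd h (⟨0, hkpos⟩ : Fin k) = i0 := Fin.ext rfl
    rw [← h1]; exact hv0 ⟨0, hkpos⟩ rfl
  -- generators
  have hgfun : ∀ j : Fin (k+h), g j = if j = i0 then (fun i => (v i : ℝ)) else Pi.single j 1 := by
    intro j
    by_cases hj : j = i0
    · subst hj; rw [if_pos rfl]; exact hg0 _ rfl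
    · rw [if_neg hj]; exact hg1 j (fun h0 => hj (Fin.ext h0))
  -- coordinates of a generic sum
  have hcoord : ∀ (t : Fin (k+h) → ℝ) (i : Fin (k+h)),
      (∑ j, t j • g j) i = t i0 * v i + (if i = i0 then 0 else t i) := by
    intro t i
    rw [Finset.sum_apply]
    have hterm : ∀ j, (t j • g j) i
        = (if j = i0 then t i0 * (v i : ℝ) else (if i = j then t j else 0)) := by
      intro j
      rw [hgfun j]
      by_cases hj : j = i0
      · subst hj; simp
      · simp only [if_neg hj, Pi.smul_apply, Pi.single_apply, smul_eq_mul]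
        by_cases hij : i = j <;> simp [hij]
    simp_rw [hterm]
    rw [Fintype.sum_eq_add_sum_compl i0, if_pos rfl]
    congr 1
    have : ∀ j ∈ ({i0}ᶜ : Finset (Fin (k+h))),
        (if j = i0 then t i0 * (v i : ℝ) else (if i = j then t j else 0))
          = (if i = j then t j else 0) := by
      intro j hj
      rw [if_neg (by simpa using hj)]
    rw [Finset.sum_congr rfl this, Finset.sum_ite_eq]
    by_cases hii : i = i0 <;> simp [hii]
  -- membership characterization of P
  have hPmem : ∀ x : Fin (k+h) → ℝ, x ∈ P ↔
      (x i0 ∈ Set.Icc (0:ℝ) z ∧ ∀ i, i ≠ i0 → x i - (v i : ℝ)/z * x i0 ∈ Set.Icc (0:ℝ) 1) := by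
    intro x
    rw [hP, Set.mem_fintype_sum]
    constructor
    · rintro ⟨y, hy, rfl⟩
      have hseg : ∀ j, ∃ t, t ∈ Set.Icc (0:ℝ) 1 ∧ t • g j = y j := by
        intro j
        have := hy j
        rw [segment_eq_image] at this
        obtain ⟨t, ht, h2⟩ := this
        exact ⟨t, ht, by simpa using h2⟩
      choose t ht1 ht2 using hseg
      have hyx : (∑ j, y j) = ∑ j, t j • g j := by
        congr 1; funext j; rw [ht2]
      rw [hyx]
      constructor
      · rw [hcoord, if_pos rfl, hvz, add_zero]
        obtain ⟨h0, h1⟩ := ht1 i0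
        exact ⟨by positivity, by nlinarith⟩
      · intro i hi
        rw [hcoord t i, hcoord t i0, if_pos rfl, if_neg hi, hvz, add_zero]
        have : t i0 * ↑(v i) + t i - ↑(v i) / ↑z * (t i0 * ↑z) = t i := by
          field_simp; ring
        rw [this]
        exact ht1 i
    · rintro ⟨h0, h1⟩
      set t : Fin (k+h) → ℝ := fun j => if j = i0 then x i0 / z else x j - (v j : ℝ)/z * x i0
        with htdef
      refine ⟨fun j => t j • g j, fun j => ?_, funext fun i => ?_⟩
      · rw [segment_eq_image]
        refine ⟨t j, ?_, by simp⟩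
        by_cases hj : j = i0
        · subst hj
          simp only [htdef, if_pos rfl]
          obtain ⟨ha', hb'⟩ := h0
          constructor
          · positivity
          · rw [div_le_one hzR0]; exact hb'
        · simp only [htdef, if_neg hj]
          exact h1 j hj
      · rw [hcoord t i]
        by_cases hi : i = i0
        · subst hi
          rw [if_pos rfl, add_zero, hvz, htdef]
          simp only [if_pos rfl, ↓reduceIte]
          field_simp
        · rw [if_neg hi, htdef]
          simp only [if_pos rfl, if_neg hi, ↓reduceIte]
          field_simp
          ring
  -- interior characterization
  have hIntEq : interior P = {x : Fin (k+h) → ℝ | x i0 ∈ Set.Ioo (0:ℝ) z ∧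
      ∀ i, i ≠ i0 → x i - (v i : ℝ)/z * x i0 ∈ Set.Ioo (0:ℝ) 1} := by
    apply Set.Subset.antisymm
    · intro x hx
      obtain ⟨ε, hε, hball⟩ := Metric.mem_nhds_iff.mp (mem_interior_iff_mem_nhds.mp hx)
      have hpt : ∀ (j : Fin (k+h)) (δ : ℝ), |δ| < ε → Function.update x j (x j + δ) ∈ P := by
        intro j δ hδ
        apply hball
        rw [Metric.mem_ball]
        have hle : dist (Function.update x j (x j + δ)) x ≤ |δ| := by
          rw [dist_pi_le_iff (abs_nonneg δ)]
          intro i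
          by_cases hij : i = j
          · subst hij; rw [Function.update_self]; simp [Real.dist_eq]
          · rw [Function.update_of_ne hij]; simp [abs_nonneg]
        linarith
      have hδ : |(ε/2 : ℝ)| < ε := by rw [abs_of_pos (by linarith)]; linarith
      have hδ' : |(-(ε/2) : ℝ)| < ε := by rw [abs_neg]; exact hδ
      constructor
      · have hm := (hPmem _).mp (hpt i0 (-(ε/2)) hδ')
        have hp' := (hPmem _).mp (hpt i0 (ε/2) hδ)
        rw [Function.update_self] at hm hp'
        obtain ⟨⟨hm0, _⟩, _⟩ := hm
        obtain ⟨⟨_, hp1⟩, _⟩ := hp'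
        constructor <;> [linarith; linarith]
      · intro i hi
        have hm := (hPmem _).mp (hpt i (-(ε/2)) hδ')
        have hp' := (hPmem _).mp (hpt i (ε/2) hδ)
        have e1 := hm.2 i hi
        have e2 := hp'.2 i hi
        rw [Function.update_self, Function.update_of_ne (Ne.symm hi)] at e1
        rw [Function.update_self, Function.update_of_ne (Ne.symm hi)] at e2
        obtain ⟨f1, _⟩ := e1
        obtain ⟨_, f2⟩ := e2
        constructor <;> [linarith; linarith]
    · apply interior_maximal
      · intro x hx
        rw [hPmem]
        exact ⟨Set.Ioo_subset_Icc_self hx.1, fun i hi => Set.Ioo_subset_Icc_self (hx.2 i hi)⟩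
      · have hrw : {x : Fin (k+h) → ℝ | x i0 ∈ Set.Ioo (0:ℝ) z ∧
            ∀ i, i ≠ i0 → x i - (v i : ℝ)/z * x i0 ∈ Set.Ioo (0:ℝ) 1}
            = ((fun x : Fin (k+h) → ℝ => x i0) ⁻¹' Set.Ioo 0 z) ∩
              ⋂ i ∈ {i : Fin (k+h) | i ≠ i0},
                (fun x : Fin (k+h) → ℝ => x i - (v i : ℝ)/z * x i0) ⁻¹' Set.Ioo 0 1 := by
          ext x
          simp [Set.mem_iInter]
        rw [hrw]
        apply IsOpen.inter
        · exact isOpen_Ioo.preimage (continuous_apply i0)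
        · apply Set.Finite.isOpen_biInter (Set.toFinite _)
          intro i _
          exact isOpen_Ioo.preimage
            ((continuous_apply i).sub (continuous_const.mul (continuous_apply i0)))
  -- description of indices i ≠ i0
  have hvcases : ∀ i : Fin (k+h), i ≠ i0 →
      (∃ i' : Fin k, (i' : ℕ) ≠ 0 ∧ v i = a i') ∨ (∃ j : Fin h, v i = z / p j) := by
    intro i hi
    by_cases hik : (i : ℕ) < k
    · left
      refine ⟨⟨i, hik⟩, fun h0 => hi (Fin.ext h0), ?_⟩
      have hceq : Fin.castAdd h (⟨i, hik⟩ : Fin k) = i := Fin.ext rfl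
      exact (congrArg v hceq).symm.trans (hva ⟨i, hik⟩ (fun h0 => hi (Fin.ext h0)))
    · right
      have hik' : (i : ℕ) - k < h := by have := i.isLt; omega
      refine ⟨⟨(i : ℕ) - k, hik'⟩, ?_⟩
      have hceq : Fin.natAdd k (⟨(i : ℕ) - k, hik'⟩ : Fin h) = i := Fin.ext (by simp; omega)
      exact (congrArg v hceq).symm.trans (hvp ⟨(i : ℕ) - k, hik'⟩)
  -- z does not divide b * v i for coprime b
  have hnd : ∀ b : ℕ, 0 < b → b < z → Nat.gcd b z = 1 →
      ∀ i : Fin (k+h), i ≠ i0 → ¬ (z ∣ b * v i) := by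
    intro b hb1 hbz hbcop i hi hdvd
    rcases hvcases i hi with ⟨i', _, hvi⟩ | ⟨j, hvi⟩
    · rw [hvi] at hdvd
      have hacop : Nat.gcd (a i') z = 1 := ((haran (a i')).mp ⟨i', rfl⟩).2.2
      have hzb : z ∣ b := (Nat.Coprime.symm hacop).dvd_of_dvd_mul_right hdvd
      have := Nat.le_of_dvd hb1 hzb
      omega
    · rw [hvi] at hdvd
      have hpj : p j ∈ z.primeFactors := (hpran (p j)).mp ⟨j, rfl⟩
      obtain ⟨hq, hqz, -⟩ := Nat.mem_primeFactors.mp hpj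
      set q := p j with hqdef
      have hzq : q * (z / q) = z := Nat.mul_div_cancel' hqz
      have hq0 : 0 < z / q := by
        rcases Nat.eq_zero_or_pos (z / q) with h0 | h0
        · rw [h0, mul_zero] at hzq; omega
        · exact h0
      have hqb : q ∣ b := by
        have h2 : q * (z / q) ∣ b * (z / q) := by rw [hzq]; exact hdvd
        exact (mul_dvd_mul_iff_right (Nat.pos_iff_ne_zero.mp hq0)).mp h2
      have : q ∣ Nat.gcd b z := Nat.dvd_gcd hqb hqz
      rw [hbcop] at this
      have h2q := hq.two_le
      have := Nat.le_of_dvd one_pos this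
      omega
  -- the interior lattice points
  set w0 : ℕ → (Fin (k+h) → ℝ) :=
    fun b i => if i = i0 then (b:ℝ) else ((b * v i / z : ℕ) : ℝ) + 1 with hw0def
  have hw0_0 : ∀ b : ℕ, w0 b i0 = (b:ℝ) := fun b => by simp [hw0def]
  have hw0_i : ∀ (b : ℕ) (i), i ≠ i0 → w0 b i = ((b * v i / z : ℕ) : ℝ) + 1 := by
    intro b i hi; simp [hw0def, hi]
  have h_w_int : ∀ b : ℕ, IsLatticePoint (w0 b) := by
    intro b i
    by_cases hi : i = i0
    · exact ⟨(b : ℤ), by rw [hi, hw0_0]; norm_cast⟩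
    · exact ⟨((b * v i / z : ℕ) : ℤ) + 1, by rw [hw0_i b i hi]; norm_cast⟩
  have hpsiw : ∀ b : ℕ, 0 < b → b < z → Nat.gcd b z = 1 → ∀ i : Fin (k+h), i ≠ i0 →
      (w0 b i - (v i : ℝ)/z * w0 b i0 = 1 - ((b * v i % z : ℕ) : ℝ)/z
        ∧ 1 ≤ b * v i % z ∧ b * v i % z < z) := by
    intro b hb0 hbz hbcop i hi
    have hrz : b * v i % z < z := Nat.mod_lt _ hz0
    have hr1 : 1 ≤ b * v i % z := by
      rcases Nat.eq_zero_or_pos (b * v i % z) with h0 | h0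
      · exact absurd (Nat.dvd_of_mod_eq_zero h0) (hnd b hb0 hbz hbcop i hi)
      · exact h0
    refine ⟨?_, hr1, hrz⟩
    have hdm : (z : ℝ) * ((b * v i / z : ℕ) : ℝ) + ((b * v i % z : ℕ) : ℝ)
        = (b : ℝ) * (v i : ℝ) := by
      exact_mod_cast congrArg (Nat.cast : ℕ → ℝ) (Nat.div_add_mod (b * v i) z)
    rw [hw0_i b i hi, hw0_0]
    field_simp
    nlinarith [hdm]
  have h_w_in : ∀ b : ℕ, 0 < b → b < z → Nat.gcd b z = 1 → w0 b ∈ interior P := by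
    intro b hb0 hbz hbcop
    rw [hIntEq]
    constructor
    · rw [hw0_0]
      exact ⟨by exact_mod_cast hb0, by exact_mod_cast hbz⟩
    · intro i hi
      obtain ⟨heq, hr1, hrz⟩ := hpsiw b hb0 hbz hbcop i hi
      rw [heq]
      have h1 : (1:ℝ) ≤ ((b * v i % z : ℕ) : ℝ) := by exact_mod_cast hr1
      have h2 : ((b * v i % z : ℕ) : ℝ) < z := by exact_mod_cast hrz
      have h3 : ((b * v i % z : ℕ) : ℝ)/z < 1 := by rw [div_lt_one hzR0]; exact h2
      have h4 : 0 < ((b * v i % z : ℕ) : ℝ)/z := div_pos (by linarith) hzR0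
      exact ⟨by linarith, by linarith⟩
  have h_w_eq : ∀ x ∈ interior P, IsLatticePoint x →
      ∃ b : ℕ, 0 < b ∧ b < z ∧ Nat.gcd b z = 1 ∧ x = w0 b := by
    intro x hx hlat
    rw [hIntEq] at hx
    obtain ⟨hx0, hxi⟩ := hx
    obtain ⟨b', hb'⟩ := hlat i0
    have hb'0 : 0 < b' := by
      have := hx0.1; rw [hb'] at this; exact_mod_cast this
    have hb'z : b' < (z:ℤ) := by
      have := hx0.2; rw [hb'] at this; exact_mod_cast this
    set b : ℕ := b'.toNat with hbdef
    have hbb' : (b : ℤ) = b' := Int.toNat_of_nonneg hb'0.le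
    have hb0 : 0 < b := by omega
    have hbz : b < z := by omega
    have hxb : x i0 = (b:ℝ) := by
      rw [hb']
      exact_mod_cast congrArg (Int.cast : ℤ → ℝ) hbb'.symm
    have hgcd : Nat.gcd b z = 1 := by
      by_contra hgne
      obtain ⟨q, hq, hqg⟩ := Nat.exists_prime_and_dvd hgne
      have hqz : q ∣ z := hqg.trans (Nat.gcd_dvd_right _ _)
      have hqb : q ∣ b := hqg.trans (Nat.gcd_dvd_left _ _)
      have hqpf : q ∈ z.primeFactors := Nat.mem_primeFactors.mpr ⟨hq, hqz, by omega⟩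
      obtain ⟨j, hj⟩ := (hpran q).mpr hqpf
      set i : Fin (k+h) := Fin.natAdd k j with hidef
      have hii0 : i ≠ i0 := by
        intro he
        have h0 : k + (j : ℕ) = 0 := by simpa [hidef, hi0def] using congrArg Fin.val he
        omega
      have hvi : v i = z / q := by rw [hidef, hvp j, hj]
      obtain ⟨m, hm⟩ := hqb
      have hkey : (v i : ℝ)/z * x i0 = (m : ℝ) := by
        rw [hvi, hxb]
        have h1 : (z / q) * b = z * m := by rw [hm, ← mul_assoc, Nat.div_mul_cancel hqz]
        have h1' : ((z/q : ℕ) : ℝ) * (b : ℝ) = (z:ℝ) * (m:ℝ) := by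
          exact_mod_cast congrArg (Nat.cast : ℕ → ℝ) h1
        rw [div_mul_eq_mul_div, h1']
        exact mul_div_cancel_left₀ _ hzne
      have hcon := hxi i hii0
      rw [hkey] at hcon
      obtain ⟨c, hc⟩ := hlat i
      rw [hc] at hcon
      obtain ⟨hlo, hhi⟩ := hcon
      have h1 : (0:ℤ) < c - m := by
        have : (0:ℝ) < ((c - m : ℤ) : ℝ) := by push_cast; linarith
        exact_mod_cast this
      have h2 : (c - m : ℤ) < 1 := by
        have : ((c - m : ℤ) : ℝ) < 1 := by push_cast; linarith
        exact_mod_cast this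
      omega
    refine ⟨b, hb0, hbz, hgcd, funext fun i => ?_⟩
    by_cases hi : i = i0
    · rw [hi, hxb, hw0_0]
    · obtain ⟨c, hc⟩ := hlat i
      have hcon := hxi i hi
      rw [hc, hxb] at hcon
      set Q : ℕ := b * v i / z with hQdef
      set R : ℕ := b * v i % z with hRdef
      have hr1 : 1 ≤ R := (hpsiw b hb0 hbz hgcd i hi).2.1
      have hrz : R < z := Nat.mod_lt _ hz0
      have hdm : (z : ℝ) * (Q : ℝ) + (R : ℝ) = (b : ℝ) * (v i : ℝ) := by
        rw [hQdef, hRdef]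
        exact_mod_cast congrArg (Nat.cast : ℕ → ℝ) (Nat.div_add_mod (b * v i) z)
      have hdm2 : (v i : ℝ) * (b : ℝ) = (z:ℝ) * (Q : ℝ) + (R : ℝ) := by
        rw [mul_comm]; linarith [hdm]
      have hvb : (v i : ℝ)/z * (b : ℝ) = (Q : ℝ) + (R : ℝ)/z := by
        field_simp
        linear_combination hdm2
      rw [hvb] at hcon
      obtain ⟨hlo, hhi⟩ := hcon
      have hr0R : 0 < (R : ℝ)/z := div_pos (by exact_mod_cast hr1) hzR0
      have hr1R : (R : ℝ)/z < 1 := by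
        rw [div_lt_one hzR0]; exact_mod_cast hrz
      have hc1 : c = (Q : ℤ) + 1 := by
        have h1 : (0:ℝ) < (c:ℝ) - (Q:ℝ) := by linarith
        have h2 : (c:ℝ) - (Q:ℝ) < 2 := by linarith
        have h1' : (0:ℤ) < c - (Q:ℤ) := by exact_mod_cast h1
        have h2' : c - (Q:ℤ) < 2 := by exact_mod_cast h2
        omega
      rw [hc, hw0_i b i hi, hc1]
      push_cast
      rw [hQdef]
  -- counting
  have hw0inj : Function.Injective w0 := by
    intro b1 b2 he
    have := congrFun he i0
    rw [hw0_0, hw0_0] at this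
    exact_mod_cast this
  have hcount : {x | x ∈ interior P ∧ IsLatticePoint x}
      = w0 '' (((Finset.range z).filter z.Coprime : Finset ℕ) : Set ℕ) := by
    ext x
    constructor
    · rintro ⟨hx, hlat⟩
      obtain ⟨b, hb0, hbz, hbg, rfl⟩ := h_w_eq x hx hlat
      refine ⟨b, ?_, rfl⟩
      simp only [Finset.coe_filter, Finset.mem_range, Set.mem_setOf_eq]
      exact ⟨hbz, Nat.coprime_comm.mp hbg⟩
    · rintro ⟨b, hb, rfl⟩
      simp only [Finset.coe_filter, Finset.mem_range, Set.mem_setOf_eq] at hb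
      obtain ⟨hbz, hcop⟩ := hb
      have hgcd : Nat.gcd b z = 1 := Nat.coprime_comm.mp hcop
      have hb0 : 0 < b := by
        rcases Nat.eq_zero_or_pos b with h0 | h0
        · subst h0; rw [Nat.gcd_zero_left] at hgcd; omega
        · exact h0
      exact ⟨h_w_in b hb0 hbz hgcd, h_w_int b⟩
  have hcard : {x | x ∈ interior P ∧ IsLatticePoint x}.ncard = z.totient := by
    rw [hcount, Set.ncard_image_of_injective _ hw0inj, Set.ncard_coe_finset]
    rfl
  refine ⟨hcard, ?_⟩
  intro w hw hlat
  obtain ⟨b, hb0, hbz, hgcd, rfl⟩ := h_w_eq w hw hlat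
  have hbR1 : (1:ℝ) ≤ (b:ℝ) := by exact_mod_cast hb0
  have hbRz : (b:ℝ) ≤ (z:ℝ) - 1 := by
    have h1 : (b:ℝ) + 1 ≤ (z:ℝ) := by exact_mod_cast hbz
    linarith
  have hz1pos : (0:ℝ) < (z:ℝ) - 1 := by linarith
  have hz1ne : (z:ℝ) - 1 ≠ 0 := ne_of_gt hz1pos
  set e : ℝ := ((z:ℝ) - 1)⁻¹ with hedef
  have he0 : 0 < e := inv_pos.mpr hz1pos
  have he1 : e * ((z:ℝ) - 1) = 1 := inv_mul_cancel₀ hz1ne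
  -- membership of z - 1 in the defining set
  have hmem : ((z:ℝ) - 1) ∈ {l : ℝ | 1 ≤ l ∧
      ({w0 b} : Set (Fin (k+h) → ℝ)) - P ⊆ l • (P - {w0 b})} := by
    constructor
    · linarith
    · rintro u hu
      rw [Set.mem_sub] at hu
      obtain ⟨w', hw', x, hx, hux⟩ := hu
      rw [Set.mem_singleton_iff] at hw'
      subst hw'
      subst hux
      set y : Fin (k+h) → ℝ := w0 b + e • (w0 b - x) with hydef
      have hyco : ∀ i, y i = w0 b i + e * (w0 b i - x i) := by
        intro i; simp [hydef]
      have hxP := (hPmem x).mp hx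
      have hyP : y ∈ P := by
        rw [hPmem]
        constructor
        · rw [hyco, hw0_0]
          obtain ⟨hx0l, hx0u⟩ := hxP.1
          have hident : (b:ℝ) + e * ((b:ℝ) - x i0) = e * ((b:ℝ) * z - x i0) := by
            rw [hedef]; field_simp; ring
          rw [hident]
          constructor
          · apply mul_nonneg he0.le; nlinarith
          · have hle : (b:ℝ) * z - x i0 ≤ ((z:ℝ) - 1) * z := by nlinarith
            calc e * ((b:ℝ) * z - x i0) ≤ e * (((z:ℝ) - 1) * z) :=
                  mul_le_mul_of_nonneg_left hle he0.le
            _ = z := by rw [← mul_assoc, he1, one_mul]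
        · intro i hi
          obtain ⟨hpw, hr1, hrz⟩ := hpsiw b hb0 hbz hgcd i hi
          obtain ⟨hs0, hs1⟩ := hxP.2 i hi
          have hrR1 : (1:ℝ) ≤ ((b * v i % z : ℕ) : ℝ) := by exact_mod_cast hr1
          have hrRz : ((b * v i % z : ℕ) : ℝ) ≤ (z:ℝ) - 1 := by
            have h1 : ((b * v i % z : ℕ) : ℝ) + 1 ≤ (z:ℝ) := by exact_mod_cast hrz
            linarith
          have hlin : y i - (v i : ℝ)/z * y i0
              = (w0 b i - (v i : ℝ)/z * w0 b i0)
                + e * ((w0 b i - (v i : ℝ)/z * w0 b i0) - (x i - (v i : ℝ)/z * x i0)) := by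
            rw [hyco i, hyco i0]; ring
          rw [hlin, hpw]
          set s : ℝ := x i - (v i : ℝ)/z * x i0 with hsdef
          set rr : ℝ := ((b * v i % z : ℕ) : ℝ) with hrrdef
          have hident : (1 - rr/z) + e * ((1 - rr/z) - s) = e * (((z:ℝ) - rr) - s) := by
            rw [hedef]; field_simp; ring
          rw [hident]
          constructor
          · apply mul_nonneg he0.le; linarith
          · have hle : ((z:ℝ) - rr) - s ≤ (z:ℝ) - 1 := by linarith
            calc e * (((z:ℝ) - rr) - s) ≤ e * ((z:ℝ) - 1) := mul_le_mul_of_nonneg_left hle he0.le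
            _ = 1 := he1
      rw [Set.mem_smul_set]
      refine ⟨y - w0 b, Set.sub_mem_sub hyP rfl, ?_⟩
      have hysub : y - w0 b = e • (w0 b - x) := by
        rw [hydef]; exact add_sub_cancel_left _ _
      rw [hysub, smul_smul, show ((z:ℝ) - 1) * e = 1 by rw [mul_comm]; exact he1, one_smul]
  -- lower bound
  have hlb : ∀ l : ℝ, (1 ≤ l ∧
      ({w0 b} : Set (Fin (k+h) → ℝ)) - P ⊆ l • (P - {w0 b})) → (z:ℝ) - 1 ≤ l := by
    rintro l ⟨hl1, hsub⟩
    have hl0 : (0:ℝ) < l := by linarith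
    have hex : ∀ x, x ∈ P → ∃ y, y ∈ P ∧ w0 b - x = l • (y - w0 b) := by
      intro x hx
      have hmem' : w0 b - x ∈ ({w0 b} : Set (Fin (k+h) → ℝ)) - P :=
        Set.sub_mem_sub rfl hx
      obtain ⟨u, hu, hueq⟩ := Set.mem_smul_set.mp (hsub hmem')
      rw [Set.mem_sub] at hu
      obtain ⟨y, hy, w', hw', hyw⟩ := hu
      rw [Set.mem_singleton_iff] at hw'
      subst hw'
      exact ⟨y, hy, by rw [← hueq, ← hyw]⟩
    have h0P : (0 : Fin (k+h) → ℝ) ∈ P := by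
      rw [hPmem]
      constructor
      · exact ⟨le_refl _, by positivity⟩
      · intro i hi
        simp only [Pi.zero_apply, mul_zero, sub_zero]
        exact ⟨le_refl _, zero_le_one⟩
    by_cases hb1 : b = 1
    · -- use x = v
      have hxP : (fun i : Fin (k+h) => (v i : ℝ)) ∈ P := by
        rw [hPmem]
        constructor
        · show (v i0 : ℝ) ∈ Set.Icc (0:ℝ) z
          rw [hvz]
          exact ⟨by positivity, le_refl _⟩
        · intro i hi
          show (v i : ℝ) - (v i : ℝ)/z * (v i0 : ℝ) ∈ Set.Icc (0:ℝ) 1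
          rw [hvz]
          have hzero : (v i : ℝ) - (v i : ℝ)/z * (z:ℝ) = 0 := by rw [div_mul_cancel₀ _ hzne, sub_self]
          rw [hzero]
          exact ⟨le_refl _, zero_le_one⟩
      obtain ⟨y, hyP, heq⟩ := hex _ hxP
      have h0 := congrFun heq i0
      simp only [Pi.sub_apply, Pi.smul_apply, smul_eq_mul] at h0
      rw [hw0_0, hvz] at h0
      have hy0 : 0 ≤ y i0 := ((hPmem y).mp hyP).1.1
      rw [hb1] at h0
      push_cast at h0
      nlinarith [h0, mul_nonneg hl0.le hy0]
    by_cases hbz1 : b + 1 = z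
    · -- use x = 0
      obtain ⟨y, hyP, heq⟩ := hex _ h0P
      have h0 := congrFun heq i0
      simp only [Pi.sub_apply, Pi.smul_apply, smul_eq_mul, Pi.zero_apply, sub_zero] at h0
      rw [hw0_0] at h0
      have hyz : y i0 ≤ z := ((hPmem y).mp hyP).1.2
      have hbzR : (b:ℝ) = (z:ℝ) - 1 := by
        have : ((b:ℝ) + 1) = (z:ℝ) := by exact_mod_cast hbz1
        linarith
      rw [hbzR] at h0
      nlinarith [h0, mul_le_mul_of_nonneg_left (show y i0 - ((z:ℝ) - 1) ≤ 1 by linarith) hl0.le]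
    · -- main case: 2 ≤ b, b + 1 < z
      haveI : NeZero z := ⟨by omega⟩
      have ha0 : a ⟨0, hkpos⟩ = 1 := by
        obtain ⟨i1, hi1⟩ := (haran 1).mpr ⟨le_refl 1, by omega, Nat.gcd_one_left z⟩
        have hge : 1 ≤ a ⟨0, hkpos⟩ := ((haran _).mp ⟨_, rfl⟩).1
        rcases Nat.eq_zero_or_pos (i1 : ℕ) with h0 | h0
        · have : i1 = ⟨0, hkpos⟩ := Fin.ext h0
          rw [← this]; exact hi1
        · have hlt : a ⟨0, hkpos⟩ < a i1 := ha (by rw [Fin.lt_def]; exact h0)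
          omega
      have hfind : ∀ c : ℕ, 2 ≤ c → 2 * c ≤ z → Nat.gcd c z = 1 →
          ∃ i : Fin (k+h), i ≠ i0 ∧ v i = c := by
        intro c hc2 hcz hccop
        obtain ⟨i', hi'⟩ := (haran c).mpr ⟨by omega, hcz, hccop⟩
        have hi'0 : (i' : ℕ) ≠ 0 := by
          intro h0
          rw [(Fin.ext h0 : i' = ⟨0, hkpos⟩), ha0] at hi'
          omega
        refine ⟨Fin.castAdd h i', ?_, ?_⟩
        · intro he
          exact hi'0 (by simpa using congrArg Fin.val he)
        · rw [hva i' hi'0, hi']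
      have hkey : ∃ i : Fin (k+h), i ≠ i0 ∧ ((b * v i) % z = 1 ∨ (b * v i) % z = z - 1) := by
        have hcop' : Nat.Coprime b z := hgcd
        set u : (ZMod z)ˣ := ZMod.unitOfCoprime b hcop' with hudef
        set c0 : ℕ := ((u⁻¹ : (ZMod z)ˣ) : ZMod z).val with hc0def
        have hc0lt : c0 < z := ZMod.val_lt _
        have hc0cast : ((c0 : ℕ) : ZMod z) = ((u⁻¹ : (ZMod z)ˣ) : ZMod z) :=
          ZMod.natCast_zmod_val _
        have hbc0 : (b * c0) % z = 1 := by
          have h1 : ((b * c0 : ℕ) : ZMod z) = ((1 : ℕ) : ZMod z) := by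
            push_cast
            rw [hc0cast, show ((b:ℕ) : ZMod z) = (u : ZMod z) from
              (ZMod.coe_unitOfCoprime b hcop').symm, ← Units.val_mul, mul_inv_cancel]
            simp
          have h2 := (ZMod.natCast_eq_natCast_iff _ _ _).mp h1
          rwa [Nat.ModEq, Nat.mod_eq_of_lt (by omega : (1:ℕ) < z)] at h2
        have hc0cop : Nat.Coprime c0 z := by
          have hU : IsUnit ((c0 : ℕ) : ZMod z) := by
            rw [hc0cast]; exact Units.isUnit _
          exact (ZMod.isUnit_iff_coprime c0 z).mp hU
        have hc00 : 0 < c0 := by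
          rcases Nat.eq_zero_or_pos c0 with h0 | h0
          · rw [h0, mul_zero, Nat.zero_mod] at hbc0; omega
          · exact h0
        by_cases hhalf : 2 * c0 ≤ z
        · have hc0ne1 : c0 ≠ 1 := by
            intro h1
            rw [h1, mul_one, Nat.mod_eq_of_lt hbz] at hbc0
            omega
          obtain ⟨i, hii, hvi⟩ := hfind c0 (by omega) hhalf hc0cop
          exact ⟨i, hii, Or.inl (by rw [hvi]; exact hbc0)⟩
        · set c := z - c0 with hcdef
          have hccast : ((c : ℕ) : ZMod z) = -((c0 : ℕ) : ZMod z) := by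
            have h1 : ((c + c0 : ℕ) : ZMod z) = ((z : ℕ) : ZMod z) := by
              rw [show c + c0 = z by omega]
            rw [Nat.cast_add, ZMod.natCast_self] at h1
            linear_combination h1
          have hccop : Nat.Coprime c z := by
            have hU : IsUnit ((c : ℕ) : ZMod z) := by
              rw [hccast, hc0cast]
              exact (Units.isUnit _).neg
            exact (ZMod.isUnit_iff_coprime c z).mp hU
          have hc2z : 2 * c ≤ z := by omega
          have hmod : (b * c) % z = z - 1 := by
            have hcc : c + c0 = z := by omega
            have h1 : b * c + b * c0 = b * z := by rw [← Nat.mul_add, hcc]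
            have h2 : (b * c + b * c0) % z = 0 := by rw [h1]; exact Nat.mul_mod_left b z
            have h3 : (b * c + 1) % z = 0 := by
              have hmodeq : b * c + b * c0 ≡ b * c + 1 [MOD z] :=
                Nat.ModEq.add_left (b * c)
                  (by rw [Nat.ModEq, hbc0, Nat.mod_eq_of_lt (by omega : (1:ℕ) < z)])
              calc (b * c + 1) % z = (b * c + b * c0) % z := hmodeq.symm
              _ = 0 := h2
            obtain ⟨s, hs⟩ := Nat.dvd_of_mod_eq_zero h3
            obtain ⟨s', rfl⟩ : ∃ s', s = s' + 1 := by
              rcases Nat.eq_zero_or_pos s with h0 | h0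
              · rw [h0, mul_zero] at hs; omega
              · exact ⟨s - 1, by omega⟩
            rw [Nat.mul_succ] at hs
            set N := z * s' with hNdef
            have hbc : b * c = (z - 1) + N := by omega
            rw [hbc, hNdef, Nat.add_mul_mod_self_left]
            exact Nat.mod_eq_of_lt (by omega)
          have hcne1 : c ≠ 1 := by
            intro h1
            rw [h1, mul_one, Nat.mod_eq_of_lt hbz] at hmod
            omega
          obtain ⟨i, hii, hvi⟩ := hfind c (by omega) hc2z hccop
          exact ⟨i, hii, Or.inr (by rw [hvi]; exact hmod)⟩
      obtain ⟨i, hi, hcase⟩ := hkey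
      obtain ⟨hpw, hr1, hrz⟩ := hpsiw b hb0 hbz hgcd i hi
      rcases hcase with hcase | hcase
      · -- r = 1 : use x = 0
        obtain ⟨y, hyP, heq⟩ := hex _ h0P
        have e1 := congrFun heq i
        have e2 := congrFun heq i0
        simp only [Pi.sub_apply, Pi.smul_apply, smul_eq_mul, Pi.zero_apply, sub_zero] at e1 e2
        have hyb := ((hPmem y).mp hyP).2 i hi
        have hpsieq : (w0 b i - (v i : ℝ)/z * w0 b i0)
            = l * ((y i - (v i : ℝ)/z * y i0) - (w0 b i - (v i : ℝ)/z * w0 b i0)) := by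
          linear_combination e1 - ((v i : ℝ)/z) * e2
        rw [hpw] at hpsieq
        have hr1R : ((b * v i % z : ℕ) : ℝ) = 1 := by rw [hcase]; norm_cast
        rw [hr1R] at hpsieq
        have hψy1 : y i - (v i : ℝ)/z * y i0 ≤ 1 := hyb.2
        have h5 : (y i - (v i : ℝ)/z * y i0) - (1 - 1/(z:ℝ)) ≤ 1/(z:ℝ) := by linarith
        have h6 := mul_le_mul_of_nonneg_left h5 hl0.le
        have h7 : (1 - 1/(z:ℝ)) * z = z - 1 := by field_simp
        have h8 : (1/(z:ℝ)) * z = 1 := by field_simp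
        have h9 : (1 - 1/(z:ℝ)) ≤ l * (1/(z:ℝ)) := by linarith [hpsieq, h6]
        have h10 := mul_le_mul_of_nonneg_right h9 hzR0.le
        have h11 : l * (1/(z:ℝ)) * z = l := by field_simp
        linarith [h10, h7, h11]
      · -- r = z - 1 : use x = single i 1
        have hxP : (Pi.single i (1:ℝ) : Fin (k+h) → ℝ) ∈ P := by
          rw [hPmem]
          constructor
          · rw [Pi.single_apply, if_neg (Ne.symm hi)]
            exact ⟨le_refl _, by positivity⟩
          · intro j hj
            rw [Pi.single_apply i (1:ℝ) i0, if_neg (Ne.symm hi), mul_zero, sub_zero,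
              Pi.single_apply]
            by_cases hji : j = i
            · rw [if_pos hji]; exact ⟨zero_le_one, le_refl _⟩
            · rw [if_neg hji]; exact ⟨le_refl _, zero_le_one⟩
        obtain ⟨y, hyP, heq⟩ := hex _ hxP
        have e1 := congrFun heq i
        have e2 := congrFun heq i0
        simp only [Pi.sub_apply, Pi.smul_apply, smul_eq_mul] at e1 e2
        rw [Pi.single_apply, if_pos rfl] at e1
        rw [Pi.single_apply, if_neg (Ne.symm hi)] at e2
        have hyb := ((hPmem y).mp hyP).2 i hi
        have hpsieq : (w0 b i - (v i : ℝ)/z * w0 b i0) - 1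
            = l * ((y i - (v i : ℝ)/z * y i0) - (w0 b i - (v i : ℝ)/z * w0 b i0)) := by
          linear_combination e1 - ((v i : ℝ)/z) * e2
        rw [hpw] at hpsieq
        have hrzR : ((b * v i % z : ℕ) : ℝ) = (z:ℝ) - 1 := by
          rw [hcase]
          push_cast [Nat.cast_sub (by omega : 1 ≤ z)]
          ring
        rw [hrzR] at hpsieq
        have hψy0 : 0 ≤ y i - (v i : ℝ)/z * y i0 := hyb.1
        have hcRz : (1 - ((z:ℝ) - 1)/z) * z = 1 := by field_simp; ring
        have hE : (1 - ((z:ℝ) - 1)/z) - 1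
            = l * (y i - (v i : ℝ)/z * y i0) - l * (1 - ((z:ℝ) - 1)/z) := by
          linear_combination hpsieq
        have h9 : 1 - (1 - ((z:ℝ) - 1)/z) ≤ l * (1 - ((z:ℝ) - 1)/z) := by
          nlinarith [mul_nonneg hl0.le hψy0]
        have h10 := mul_le_mul_of_nonneg_right h9 hzR0.le
        have h11 : l * (1 - ((z:ℝ) - 1)/z) * z = l := by rw [mul_assoc, hcRz, mul_one]
        have h12 : (1 - (1 - ((z:ℝ) - 1)/z)) * z = z - 1 := by linear_combination -hcRz
        linarith [h10, h11, h12]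
  unfold ca
  apply le_antisymm
  · exact csInf_le ⟨1, fun x hx => hx.1⟩ hmem
  · exact le_csInf ⟨_, hmem⟩ (fun l hl => hlb l hl)
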